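/- Let H(T) = Σ_{i≥0} hᵢ Tⁱ = ∏ᵢ (1 − xᵢT)^{−1} be the generating function of complete homogeneous symmetric functions (in N variables). Applying the derivation Lₙ(f) = −Σᵢ xᵢ^{n+1} ∂f/∂xᵢ coefficientwise for n ≥ 1 yields Lₙ(H(T)) = Σ_{j=0}^{n−1} T^{−j} p_{n−j} H(T) − Σ_{i≥0} i·hᵢ·T^{i−n}, as an identity of formal Laurent series in T; equivalently, comparing coefficients of Tᵐ gives Lₙ(hₘ) = −(n+m)h_{n+m} + Σ_{j=0}^{n−1} p_{n−j}h_{m+j}. -/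

import Mathlib

open MvPolynomial Finset

set_option linter.unusedSectionVars false

namespace WittAux

variable {σ : Type*} [Fintype σ] [DecidableEq σ]

lemma prod_map_X (μ : Multiset σ) :
    ((μ.map (X : σ → MvPolynomial σ ℚ)).prod) = monomial μ.toFinsupp 1 := by
  induction μ using Multiset.induction with
  | empty => simp [monomial_zero']
  | cons a μ ih =>
      have hc : (a ::ₘ μ).toFinsupp = Finsupp.single a 1 + μ.toFinsupp := by
        rw [← Multiset.singleton_add, Multiset.toFinsupp_add, Multiset.toFinsupp_singleton]
      rw [Multiset.map_cons, Multiset.prod_cons, ih, hc, X, monomial_mul, one_mul]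

lemma hsymm_eq (m : ℕ) :
    hsymm σ ℚ m = ∑ s : Sym σ m, monomial (Multiset.toFinsupp s.1) 1 := by
  simp [hsymm, prod_map_X]

lemma sum_count (μ : Multiset σ) : ∑ a : σ, μ.count a = Multiset.card μ := by
  induction μ using Multiset.induction with
  | empty => simp
  | cons a μ ih => simp [Multiset.count_cons, Finset.sum_add_distrib, ih, add_comm]

lemma sum_toFinsupp (u : σ →₀ ℕ) : ∑ a : σ, u a = Multiset.card u.toMultiset := by
  rw [← sum_count u.toMultiset]
  simp [Finsupp.count_toMultiset]

lemma sum_sub_single (d : σ →₀ ℕ) (i : σ) (k : ℕ) (h : k ≤ d i) :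
    ∑ a : σ, (d - Finsupp.single i k) a = (∑ a : σ, d a) - k := by
  have h1 : (d - Finsupp.single i k) + Finsupp.single i k = d :=
    tsub_add_cancel_of_le (Finsupp.single_le_iff.2 h)
  have h2 : (∑ a : σ, (d - Finsupp.single i k) a) + k = ∑ a : σ, d a := by
    conv_rhs => rw [← h1]
    simp [Finsupp.add_apply, Finset.sum_add_distrib, Finsupp.single_apply]
  omega

lemma coeff_hsymm (m : ℕ) (d : σ →₀ ℕ) :
    coeff d (hsymm σ ℚ m) = if (∑ a : σ, d a) = m then 1 else 0 := by
  rw [hsymm_eq]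
  simp only [coeff_sum, coeff_monomial]
  by_cases h : (∑ a : σ, d a) = m
  · have hb : Multiset.card d.toMultiset = m := by rw [← sum_toFinsupp]; exact h
    rw [if_pos h]
    have : ∀ s : Sym σ m, (Multiset.toFinsupp s.1 = d) ↔ s = ⟨d.toMultiset, hb⟩ := by
      intro s
      constructor
      · intro hs
        apply Subtype.ext
        show s.1 = d.toMultiset
        rw [← hs]; simp
      · intro hs; rw [hs]; simp
    classical
    rw [Finset.sum_congr rfl (fun s _ => by rw [if_congr (this s) rfl rfl])]
    simp
    exact Finset.card_eq_one.mpr ⟨⟨d.toMultiset, hb⟩, by ext; simp only [Finset.mem_filter, Finset.mem_univ, true_and]; exact Finset.mem_singleton.symm⟩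
  · rw [if_neg h]
    apply Finset.sum_eq_zero
    intro s _
    rw [if_neg]
    intro hs
    apply h
    rw [← hs]
    rw [sum_toFinsupp]
    simp [s.2]

/-- Coefficient of `X i ^ (n+1) * ∂ᵢ hₘ`. -/
lemma coeff_X_pow_mul_pderiv_hsymm (i : σ) (n m : ℕ) (d : σ →₀ ℕ) :
    coeff d ((X i : MvPolynomial σ ℚ) ^ (n + 1) * pderiv i (hsymm σ ℚ m))
      = if n ≤ d i ∧ (∑ a : σ, d a) = m + n then ((d i - n : ℕ) : ℚ) else 0 := by
  have hterm : ∀ u : σ →₀ ℕ,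
      (X i : MvPolynomial σ ℚ) ^ (n + 1) * pderiv i (monomial u 1)
        = monomial (u + Finsupp.single i n) ((u i : ℚ)) := by
    intro u
    rw [pderiv_monomial, X_pow_eq_monomial, monomial_mul, one_mul, one_mul]
    by_cases hu : u i = 0
    · simp [hu]
    · have hA : Finsupp.single i (n + 1) + (u - Finsupp.single i 1)
          = u + Finsupp.single i n := by
        ext j
        by_cases hij : i = j
        · subst hij
          simp only [Finsupp.add_apply, Finsupp.tsub_apply, Finsupp.single_apply]
          split_ifs with h
          · omega
          · exact absurd trivial h
        · simp [Finsupp.add_apply, Finsupp.tsub_apply, Finsupp.single_apply, hij]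
      rw [hA]
  rw [hsymm_eq, map_sum, Finset.mul_sum]
  simp only [hterm, coeff_sum, coeff_monomial]
  have hcard : ∀ s : Sym σ m, ∑ a : σ, (Multiset.toFinsupp s.1) a = m := by
    intro s
    rw [sum_toFinsupp]
    simp [s.2]
  by_cases h : n ≤ d i ∧ (∑ a : σ, d a) = m + n
  · rw [if_pos h]
    obtain ⟨h1, h2⟩ := h
    have hb : Multiset.card (d - Finsupp.single i n).toMultiset = m := by
      rw [← sum_toFinsupp, sum_sub_single d i n h1, h2]; omega
    set b : Sym σ m := ⟨(d - Finsupp.single i n).toMultiset, hb⟩ with hbdef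
    have key : ∀ s : Sym σ m,
        (Multiset.toFinsupp s.1 + Finsupp.single i n = d) ↔ s = b := by
      intro s
      constructor
      · intro hs
        apply Subtype.ext
        show s.1 = (d - Finsupp.single i n).toMultiset
        have : Multiset.toFinsupp s.1 = d - Finsupp.single i n := by
          rw [← hs]; simp
        rw [← this]; simp
      · intro hs
        rw [hs]
        show Multiset.toFinsupp (d - Finsupp.single i n).toMultiset
            + Finsupp.single i n = d
        rw [Finsupp.toMultiset_toFinsupp]
        exact tsub_add_cancel_of_le (Finsupp.single_le_iff.2 h1)
    rw [Finset.sum_congr rfl (fun s _ => by rw [if_congr (key s) rfl rfl])]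
    rw [Finset.sum_ite_eq' Finset.univ b]
    simp only [Finset.mem_univ, if_pos]
    show ((Multiset.toFinsupp (d - Finsupp.single i n).toMultiset) i : ℚ) = _
    rw [Finsupp.toMultiset_toFinsupp]
    simp [Finsupp.tsub_apply]
  · rw [if_neg h]
    apply Finset.sum_eq_zero
    intro s _
    rw [if_neg]
    intro hs
    apply h
    have h1 : d i = (Multiset.toFinsupp s.1) i + n := by
      rw [← hs]; simp [Finsupp.add_apply]
    constructor
    · omega
    · rw [← hs]
      rw [Finset.sum_congr rfl (fun a _ => Finsupp.add_apply _ _ _),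
        Finset.sum_add_distrib, hcard s]
      simp [Finsupp.single_apply]

/-- Coefficient of `p_k * h_l`. -/
lemma coeff_psum_mul_hsymm (k l : ℕ) (hk : 1 ≤ k) (d : σ →₀ ℕ) :
    coeff d (psum σ ℚ k * hsymm σ ℚ l)
      = ∑ i : σ, if k ≤ d i ∧ (∑ a : σ, d a) = l + k then (1 : ℚ) else 0 := by
  rw [psum, Finset.sum_mul, coeff_sum]
  apply Finset.sum_congr rfl
  intro i _
  rw [X_pow_eq_monomial, coeff_monomial_mul']
  by_cases h1 : k ≤ d i
  · rw [if_pos (Finsupp.single_le_iff.2 h1), coeff_hsymm, sum_sub_single d i k h1]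
    have hle : k ≤ ∑ a : σ, d a := by
      calc k ≤ d i := h1
        _ ≤ ∑ a : σ, d a := Finset.single_le_sum (fun a _ => Nat.zero_le _) (Finset.mem_univ i)
    by_cases h2 : (∑ a : σ, d a) = l + k
    · rw [if_pos (by omega), if_pos ⟨h1, h2⟩, one_mul]
    · rw [if_neg (by omega), if_neg (by tauto), mul_zero]
  · rw [if_neg (by rw [Finsupp.single_le_iff]; exact h1), if_neg (by tauto)]

lemma sum_ite_min (a n : ℕ) :
    ∑ j ∈ range n, (if n - j ≤ a then 1 else 0) = min a n := by
  have h1 : ∀ j ∈ range n, (if n - j ≤ a then (1:ℕ) else 0) = if n - a ≤ j then 1 else 0 := by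
    intro j hj
    rw [Finset.mem_range] at hj
    by_cases h : n - j ≤ a
    · rw [if_pos h, if_pos (by omega)]
    · rw [if_neg h, if_neg (by omega)]
  rw [Finset.sum_congr rfl h1, Finset.range_eq_Ico,
    ← Finset.sum_Ico_consecutive _ (Nat.zero_le (n - a)) (Nat.sub_le n a)]
  have h2 : ∑ j ∈ Finset.Ico 0 (n - a), (if n - a ≤ j then (1:ℕ) else 0) = 0 := by
    apply Finset.sum_eq_zero
    intro j hj
    rw [Finset.mem_Ico] at hj
    rw [if_neg (by omega)]
  have h3 : ∑ j ∈ Finset.Ico (n - a) n, (if n - a ≤ j then (1:ℕ) else 0)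
      = ∑ _j ∈ Finset.Ico (n - a) n, 1 := by
    apply Finset.sum_congr rfl
    intro j hj
    rw [Finset.mem_Ico] at hj
    rw [if_pos hj.1]
  rw [h2, h3, zero_add, Finset.sum_const, Nat.card_Ico, smul_eq_mul, mul_one]
  omega

lemma key_nat (a n : ℕ) :
    (if n ≤ a then a - n else 0) + (∑ j ∈ range n, if n - j ≤ a then 1 else 0) = a := by
  rw [sum_ite_min]
  by_cases h : n ≤ a
  · rw [if_pos h]; omega
  · rw [if_neg h]; omega

end WittAux

open WittAux in
/-- Applying Lₙ = -∑ᵢ xᵢ^{n+1}∂/∂xᵢ coefficientwise to the generating function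
H(T) = ∑ hₘ Tᵐ of complete homogeneous symmetric polynomials yields, comparing
coefficients of Tᵐ: Lₙ(hₘ) = -(n+m)h_{n+m} + ∑_{j=0}^{n-1} p_{n-j} h_{m+j},
stated here as an equality of formal power series in T. -/
theorem wittOp_genfun_hsymm (N : ℕ) (n : ℕ) (hn : 1 ≤ n) :
    PowerSeries.mk
        (fun m => - ∑ i : Fin N, X i ^ (n + 1) * pderiv i (hsymm (Fin N) ℚ m))
      = PowerSeries.mk
        (fun m => -(((n + m : ℕ) : ℚ)) • hsymm (Fin N) ℚ (n + m)
          + ∑ j ∈ range n, psum (Fin N) ℚ (n - j) * hsymm (Fin N) ℚ (m + j)) := by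
  refine PowerSeries.ext fun m => ?_
  rw [PowerSeries.coeff_mk, PowerSeries.coeff_mk]
  apply MvPolynomial.ext
  intro d
  rw [coeff_neg, coeff_add, coeff_smul, coeff_sum, coeff_sum, coeff_hsymm]
  rw [Finset.sum_congr rfl (fun i (_ : i ∈ Finset.univ) =>
    coeff_X_pow_mul_pderiv_hsymm i n m d)]
  rw [Finset.sum_congr rfl (fun j hj =>
    coeff_psum_mul_hsymm (n - j) (m + j) (by rw [Finset.mem_range] at hj; omega) d)]
  have hdle : ∀ i : Fin N, d i ≤ ∑ a, d a :=
    fun i => Finset.single_le_sum (fun a _ => Nat.zero_le (d a)) (Finset.mem_univ i)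
  by_cases hS : (∑ a, d a) = m + n
  · have e1 : ∀ i : Fin N, (if n ≤ d i ∧ (∑ a, d a) = m + n then ((d i - n : ℕ) : ℚ) else 0)
        = ((if n ≤ d i then d i - n else 0 : ℕ) : ℚ) := by
      intro i
      by_cases h : n ≤ d i
      · rw [if_pos ⟨h, hS⟩, if_pos h]
      · rw [if_neg (by tauto), if_neg h, Nat.cast_zero]
    have e2 : ∀ j ∈ range n, ∀ i : Fin N,
        (if n - j ≤ d i ∧ (∑ a, d a) = (m + j) + (n - j) then (1 : ℚ) else 0)
          = ((if n - j ≤ d i then 1 else 0 : ℕ) : ℚ) := by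
      intro j hj i
      rw [Finset.mem_range] at hj
      by_cases h : n - j ≤ d i
      · rw [if_pos ⟨h, by omega⟩, if_pos h, Nat.cast_one]
      · rw [if_neg (by tauto), if_neg h, Nat.cast_zero]
    rw [Finset.sum_congr rfl (fun i _ => e1 i)]
    rw [Finset.sum_congr rfl (fun j hj => Finset.sum_congr rfl (fun i _ => e2 j hj i))]
    rw [if_pos (by omega : (∑ a, d a) = n + m)]
    rw [Finset.sum_comm]
    have key : (∑ i : Fin N, if n ≤ d i then d i - n else 0)
        + (∑ i : Fin N, ∑ j ∈ range n, if n - j ≤ d i then 1 else 0) = m + n := by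
      rw [← Finset.sum_add_distrib]
      rw [Finset.sum_congr rfl (fun i (_ : i ∈ Finset.univ) => key_nat (d i) n)]
      rw [hS]
    have := congrArg (fun x : ℕ => (x : ℚ)) key
    push_cast [smul_eq_mul] at this ⊢
    linarith
  · have z1 : ∑ i : Fin N, (if n ≤ d i ∧ (∑ a, d a) = m + n then ((d i - n : ℕ) : ℚ) else 0)
        = 0 := Finset.sum_eq_zero fun i _ => if_neg (fun h => hS h.2)
    have z2 : ∑ j ∈ range n, ∑ i : Fin N,
        (if n - j ≤ d i ∧ (∑ a, d a) = (m + j) + (n - j) then (1 : ℚ) else 0) = 0 := by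
      refine Finset.sum_eq_zero fun j hj => Finset.sum_eq_zero fun i _ => if_neg ?_
      rw [Finset.mem_range] at hj
      rintro ⟨h1, h2⟩
      exact hS (by have := hdle i; omega)
    rw [z1, z2, if_neg (fun h => hS (by omega)), neg_zero, smul_zero, add_zero]
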